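/- arXiv:math/0607788 — 6 statements merged into one kernel-verified Lean document; each statement's English description precedes it below -/
import Mathlib

section
/- For all natural numbers k, l ≥ 1, r(k+1, l+1) ≤ binomial(k+l, k). -/
/-- The colouring `χ` contains a monochromatic clique of colour `c` and size `k`. -/
def hasMonoClique {n : ℕ} (χ : Fin n → Fin n → Bool) (c : Bool) (k : ℕ) : Prop :=
  ∃ S : Finset (Fin n), S.card = k ∧ ∀ x ∈ S, ∀ y ∈ S, x ≠ y → χ x y = c

/-- `n` is Ramsey for `(k, l)`: every symmetric red/blue colouring of the edges of `K_n`
contains a red `K_k` or a blue `K_l`. -/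
def ramseyProp (n k l : ℕ) : Prop :=
  ∀ χ : Fin n → Fin n → Bool, (∀ x y, χ x y = χ y x) →
    hasMonoClique χ true k ∨ hasMonoClique χ false l

/-- The two-colour Ramsey number `r(k, l)`. -/
noncomputable def ramsey (k l : ℕ) : ℕ := sInf {n | ramseyProp n k l}

lemma lift_clique {n m k : ℕ} {χ : Fin m → Fin m → Bool} {c : Bool} {f : Fin n → Fin m}
    (hf : Function.Injective f) :
    hasMonoClique (fun x y => χ (f x) (f y)) c k → hasMonoClique χ c k := by
  rintro ⟨S, hcard, hmono⟩
  refine ⟨S.image f, by rw [Finset.card_image_of_injective _ hf, hcard], ?_⟩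
  intro x hx y hy hxy
  simp only [Finset.mem_image] at hx hy
  obtain ⟨i, hi, rfl⟩ := hx
  obtain ⟨j, hj, rfl⟩ := hy
  exact hmono i hi j hj (fun h => hxy (by rw [h]))

lemma lift_clique_insert {n m k : ℕ} {χ : Fin m → Fin m → Bool} {c : Bool} {f : Fin n → Fin m}
    (hf : Function.Injective f) (v : Fin m) (hv : ∀ i, f i ≠ v) (hvc : ∀ i, χ v (f i) = c)
    (hsym : ∀ x y, χ x y = χ y x) :
    hasMonoClique (fun x y => χ (f x) (f y)) c k → hasMonoClique χ c (k + 1) := by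
  rintro ⟨S, hcard, hmono⟩
  have hvim : v ∉ S.image f := by
    simp only [Finset.mem_image]
    rintro ⟨i, _, h⟩
    exact hv i h
  refine ⟨insert v (S.image f), ?_, ?_⟩
  · rw [Finset.card_insert_of_notMem hvim, Finset.card_image_of_injective _ hf, hcard]
  · intro x hx y hy hxy
    simp only [Finset.mem_insert, Finset.mem_image] at hx hy
    rcases hx with rfl | ⟨i, hi, rfl⟩
    · rcases hy with rfl | ⟨j, hj, rfl⟩
      · exact absurd rfl hxy
      · exact hvc j
    · rcases hy with rfl | ⟨j, hj, rfl⟩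
      · rw [hsym]; exact hvc i
      · exact hmono i hi j hj (fun h => hxy (by rw [h]))

lemma ramseyProp_one_left {n l : ℕ} (hn : 1 ≤ n) : ramseyProp n 1 l := by
  intro χ _
  left
  exact ⟨{⟨0, hn⟩}, Finset.card_singleton _, by
    intro x hx y hy hxy
    simp only [Finset.mem_singleton] at hx hy
    exact absurd (hx.trans hy.symm) hxy⟩

lemma ramseyProp_one_right {n k : ℕ} (hn : 1 ≤ n) : ramseyProp n k 1 := by
  intro χ _
  right
  exact ⟨{⟨0, hn⟩}, Finset.card_singleton _, by
    intro x hx y hy hxy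
    simp only [Finset.mem_singleton] at hx hy
    exact absurd (hx.trans hy.symm) hxy⟩

lemma ramseyProp_step {a b k l : ℕ} (ha1 : 1 ≤ a) (hb1 : 1 ≤ b)
    (ha : ramseyProp a k (l + 1)) (hb : ramseyProp b (k + 1) l) :
    ramseyProp (a + b) (k + 1) (l + 1) := by
  intro χ hsym
  have hab : 0 < a + b := by omega
  set v : Fin (a + b) := ⟨0, hab⟩ with hv
  set s : Finset (Fin (a + b)) := Finset.univ.erase v with hs
  have hscard : s.card = a + b - 1 := by
    rw [hs, Finset.card_erase_of_mem (Finset.mem_univ _), Finset.card_univ, Fintype.card_fin]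
  set R := s.filter (fun x => χ v x = true) with hR
  set B := s.filter (fun x => ¬(χ v x = true)) with hB
  have hRB : R.card + B.card = s.card := Finset.card_filter_add_card_filter_not _
  have hcases : a ≤ R.card ∨ b ≤ B.card := by omega
  rcases hcases with hle | hle
  · obtain ⟨T, hTR, hT⟩ := Finset.exists_subset_card_eq hle
    set e := T.orderIsoOfFin hT with he
    set f : Fin a → Fin (a + b) := fun i => (e i : Fin (a + b)) with hf
    have hfinj : Function.Injective f := fun i j h => e.injective (Subtype.ext h)
    have hmem : ∀ i, f i ∈ R := fun i => hTR (e i).2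
    have hne : ∀ i, f i ≠ v := by
      intro i
      have := hmem i
      rw [hR, Finset.mem_filter, hs, Finset.mem_erase] at this
      exact this.1.1
    have hcol : ∀ i, χ v (f i) = true := by
      intro i
      have := hmem i
      rw [hR, Finset.mem_filter] at this
      exact this.2
    rcases ha (fun i j => χ (f i) (f j)) (fun i j => hsym _ _) with h | h
    · exact Or.inl (lift_clique_insert hfinj v hne hcol hsym h)
    · exact Or.inr (lift_clique hfinj h)
  · obtain ⟨T, hTB, hT⟩ := Finset.exists_subset_card_eq hle
    set e := T.orderIsoOfFin hT with he
    set f : Fin b → Fin (a + b) := fun i => (e i : Fin (a + b)) with hf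
    have hfinj : Function.Injective f := fun i j h => e.injective (Subtype.ext h)
    have hmem : ∀ i, f i ∈ B := fun i => hTB (e i).2
    have hne : ∀ i, f i ≠ v := by
      intro i
      have := hmem i
      rw [hB, Finset.mem_filter, hs, Finset.mem_erase] at this
      exact this.1.1
    have hcol : ∀ i, χ v (f i) = false := by
      intro i
      have := hmem i
      rw [hB, Finset.mem_filter] at this
      exact Bool.not_eq_true _ |>.mp this.2
    rcases hb (fun i j => χ (f i) (f j)) (fun i j => hsym _ _) with h | h
    · exact Or.inl (lift_clique hfinj h)
    · exact Or.inr (lift_clique_insert hfinj v hne hcol hsym h)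

lemma ramsey_key : ∀ n k l : ℕ, k + l ≤ n → ramseyProp ((k + l).choose k) (k + 1) (l + 1) := by
  intro n
  induction n with
  | zero =>
    intro k l h
    have hk : k = 0 := by omega
    have hl : l = 0 := by omega
    subst hk; subst hl
    exact ramseyProp_one_left le_rfl
  | succ n ih =>
    intro k l h
    match k, l with
    | 0, l => simpa using ramseyProp_one_left le_rfl
    | k + 1, 0 => simpa using ramseyProp_one_right le_rfl
    | k + 1, l + 1 =>
      have h1 := ih k (l + 1) (by omega)
      have h2 := ih (k + 1) l (by omega)
      have ha1 : 1 ≤ (k + (l + 1)).choose k := Nat.choose_pos (by omega)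
      have hb1 : 1 ≤ (k + 1 + l).choose (k + 1) := Nat.choose_pos (by omega)
      have hsum : (k + (l + 1)).choose k + (k + 1 + l).choose (k + 1)
          = (k + 1 + (l + 1)).choose (k + 1) := by
        have : k + 1 + (l + 1) = (k + l + 1) + 1 := by omega
        rw [this, Nat.choose_succ_succ]
        congr 1 <;> congr 1 <;> omega
      rw [← hsum]
      exact ramseyProp_step ha1 hb1 h1 h2

theorem stmt1 (k l : ℕ) (hk : 1 ≤ k) (hl : 1 ≤ l) :
    ramsey (k + 1) (l + 1) ≤ (k + l).choose k := by
  exact Nat.sInf_le (ramsey_key (k + l) k l le_rfl)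
end

section
/- Goodman's formula: in any red/blue colouring of the edges of K_n, the number T of monochromatic triangles equals (1/2)[ Σ_x C(d_x, 2) + Σ_x C(n-1-d_x, 2) - C(n, 3) ], where d_x is the red degree of vertex x. -/
open Finset

def cond2 {n : ℕ} (χ : Fin n → Fin n → Bool) (x : Fin n) (P : Finset (Fin n)) : Prop :=
  (∀ y ∈ P, χ x y = true) ∨ (∀ y ∈ P, χ x y = false)

instance {n : ℕ} (χ : Fin n → Fin n → Bool) (x : Fin n) (P : Finset (Fin n)) :
    Decidable (cond2 χ x P) := by unfold cond2; infer_instance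

lemma lemA {n : ℕ} (χ : Fin n → Fin n → Bool) (x : Fin n) :
    (((univ.erase x).powersetCard 2).filter (cond2 χ x)).card
      = ((univ.filter fun y => y ≠ x ∧ χ x y = true).card).choose 2
        + ((univ.filter fun y => y ≠ x ∧ χ x y = false).card).choose 2 := by
  set R := univ.filter fun y : Fin n => y ≠ x ∧ χ x y = true with hRdef
  set B := univ.filter fun y : Fin n => y ≠ x ∧ χ x y = false with hBdef
  have hsplit : ((univ.erase x).powersetCard 2).filter (cond2 χ x)
      = R.powersetCard 2 ∪ B.powersetCard 2 := by
    ext P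
    simp only [mem_filter, mem_powersetCard, mem_union, hRdef, hBdef, cond2]
    constructor
    · rintro ⟨⟨hPsub, hP2⟩, h | h⟩
      · left; refine ⟨fun y hy => ?_, hP2⟩
        have hne := mem_erase.1 (hPsub hy)
        simp only [mem_filter, mem_univ, true_and]
        exact ⟨hne.1, h y hy⟩
      · right; refine ⟨fun y hy => ?_, hP2⟩
        have hne := mem_erase.1 (hPsub hy)
        simp only [mem_filter, mem_univ, true_and]
        exact ⟨hne.1, h y hy⟩
    · rintro (⟨hPsub, hP2⟩ | ⟨hPsub, hP2⟩)
      · refine ⟨⟨fun y hy => ?_, hP2⟩, Or.inl fun y hy => ?_⟩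
        · have := (mem_filter.1 (hPsub hy)).2.1
          exact mem_erase.2 ⟨this, mem_univ y⟩
        · exact ((mem_filter.1 (hPsub hy)).2).2
      · refine ⟨⟨fun y hy => ?_, hP2⟩, Or.inr fun y hy => ?_⟩
        · have := (mem_filter.1 (hPsub hy)).2.1
          exact mem_erase.2 ⟨this, mem_univ y⟩
        · exact ((mem_filter.1 (hPsub hy)).2).2
  have hdisj : Disjoint (R.powersetCard 2) (B.powersetCard 2) := by
    rw [disjoint_left]
    intro P hPR hPB
    rw [mem_powersetCard] at hPR hPB
    obtain ⟨y, hy⟩ := card_pos.1 (by rw [hPR.2]; norm_num)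
    have h1 := (mem_filter.1 (hPR.1 hy)).2.2
    have h2 := (mem_filter.1 (hPB.1 hy)).2.2
    simp [h1] at h2
  rw [hsplit, card_union_of_disjoint hdisj, card_powersetCard, card_powersetCard]

lemma lemB {n : ℕ} (χ : Fin n → Fin n → Bool) :
    ∑ x : Fin n, (((univ.erase x).powersetCard 2).filter (cond2 χ x)).card
      = ∑ S ∈ (univ : Finset (Fin n)).powersetCard 3,
          (S.filter fun x => cond2 χ x (S.erase x)).card := by
  rw [← Finset.card_sigma, ← Finset.card_sigma]
  refine Finset.card_nbij' (fun p => ⟨insert p.1 p.2, p.1⟩) (fun q => ⟨q.2, q.1.erase q.2⟩)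
    ?_ ?_ ?_ ?_
  · intro p hp; obtain ⟨x, P⟩ := p
    simp only [mem_coe, mem_sigma, mem_univ, true_and, mem_filter, mem_powersetCard] at hp ⊢
    obtain ⟨⟨hPsub, hP2⟩, hc⟩ := hp
    have hxP : x ∉ P := fun hx => (mem_erase.1 (hPsub hx)).1 rfl
    refine ⟨⟨subset_univ _, ?_⟩, mem_insert_self _ _, ?_⟩
    · rw [card_insert_of_notMem hxP, hP2]
    · rwa [erase_insert hxP]
  · intro q hq; obtain ⟨S, x⟩ := q
    simp only [mem_coe, mem_sigma, mem_univ, true_and, mem_filter, mem_powersetCard] at hq ⊢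
    obtain ⟨⟨_, hS3⟩, hxS, hc⟩ := hq
    refine ⟨⟨?_, ?_⟩, hc⟩
    · exact erase_subset_erase x (subset_univ S)
    · rw [card_erase_of_mem hxS, hS3]
  · intro p hp; obtain ⟨x, P⟩ := p
    simp only [mem_coe, mem_sigma, mem_univ, true_and, mem_filter, mem_powersetCard] at hp
    have hxP : x ∉ P := fun hx => (mem_erase.1 (hp.1.1 hx)).1 rfl
    simp [erase_insert hxP]
  · intro q hq; obtain ⟨S, x⟩ := q
    simp only [mem_coe, mem_sigma, mem_filter] at hq
    simp [insert_erase hq.2.1]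

lemma lemC {n : ℕ} (χ : Fin n → Fin n → Bool) (hsymm : ∀ x y, χ x y = χ y x)
    (S : Finset (Fin n)) (hS : S ∈ (univ : Finset (Fin n)).powersetCard 3) :
    (S.filter fun x => cond2 χ x (S.erase x)).card
      = if ((∀ x ∈ S, ∀ y ∈ S, x ≠ y → χ x y = true) ∨
            (∀ x ∈ S, ∀ y ∈ S, x ≠ y → χ x y = false)) then 3 else 1 := by
  rw [mem_powersetCard] at hS
  obtain ⟨a, b, c, hab, hac, hbc, rfl⟩ := card_eq_three.1 hS.2
  have hanb : a ∉ ({b, c} : Finset (Fin n)) := by simp [hab, hac]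
  have hbnc : b ∉ ({c} : Finset (Fin n)) := by simp [hbc]
  have hEa : ({a, b, c} : Finset (Fin n)).erase a = {b, c} := erase_insert hanb
  have hEb : ({a, b, c} : Finset (Fin n)).erase b = {a, c} := by
    rw [erase_insert_of_ne hab, erase_insert hbnc]
  have hEc : ({a, b, c} : Finset (Fin n)).erase c = {a, b} := by
    rw [erase_insert_of_ne hac, erase_insert_of_ne hbc]
    simp
  have hall : ∀ (v : Bool),
      (∀ x ∈ ({a,b,c} : Finset (Fin n)), ∀ y ∈ ({a,b,c} : Finset (Fin n)), x ≠ y → χ x y = v)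
        ↔ (χ a b = v ∧ χ a c = v ∧ χ b c = v) := by
    intro v
    constructor
    · intro h
      exact ⟨h a (by simp) b (by simp) hab, h a (by simp) c (by simp) hac,
        h b (by simp) c (by simp) hbc⟩
    · rintro ⟨h1, h2, h3⟩ x hx y hy hxy
      simp only [mem_insert, mem_singleton] at hx hy
      rcases hx with rfl | rfl | rfl <;> rcases hy with rfl | rfl | rfl <;>
        first
          | exact absurd rfl hxy
          | assumption
          | (rw [hsymm]; assumption)
  have hpa : cond2 χ a (({a,b,c} : Finset (Fin n)).erase a)
      ↔ ((χ a b = true ∧ χ a c = true) ∨ (χ a b = false ∧ χ a c = false)) := by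
    rw [hEa]; simp [cond2]
  have hpb : cond2 χ b (({a,b,c} : Finset (Fin n)).erase b)
      ↔ ((χ a b = true ∧ χ b c = true) ∨ (χ a b = false ∧ χ b c = false)) := by
    rw [hEb]; simp [cond2, hsymm b a]
  have hpc : cond2 χ c (({a,b,c} : Finset (Fin n)).erase c)
      ↔ ((χ a c = true ∧ χ b c = true) ∨ (χ a c = false ∧ χ b c = false)) := by
    rw [hEc]; simp [cond2, hsymm c a, hsymm c b]
  rw [card_filter, sum_insert hanb, sum_insert hbnc, sum_singleton]
  simp only [hpa, hpb, hpc, hall]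
  cases h1 : χ a b <;> cases h2 : χ a c <;> cases h3 : χ b c <;>
    simp [h1, h2, h3]

theorem stmt4 (n : ℕ) (χ : Fin n → Fin n → Bool) (hsymm : ∀ x y, χ x y = χ y x) :
    (((Finset.univ : Finset (Fin n)).powersetCard 3).filter
        (fun S => (∀ x ∈ S, ∀ y ∈ S, x ≠ y → χ x y = true) ∨
          (∀ x ∈ S, ∀ y ∈ S, x ≠ y → χ x y = false))).card
      = (1 / 2 : ℝ) *
        ((∑ x : Fin n, ((Finset.univ.filter fun y => y ≠ x ∧ χ x y = true).card.choose 2 : ℝ)) +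
         (∑ x : Fin n,
            ((n - 1 - (Finset.univ.filter fun y => y ≠ x ∧ χ x y = true).card).choose 2 : ℝ)) -
         (n.choose 3 : ℝ)) := by
  set T := (((Finset.univ : Finset (Fin n)).powersetCard 3).filter
      (fun S => (∀ x ∈ S, ∀ y ∈ S, x ≠ y → χ x y = true) ∨
        (∀ x ∈ S, ∀ y ∈ S, x ≠ y → χ x y = false))).card with hT
  have hdeg : ∀ x : Fin n,
      (univ.filter fun y => y ≠ x ∧ χ x y = true).card
        + (univ.filter fun y => y ≠ x ∧ χ x y = false).card = n - 1 := by
    intro x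
    have hu : (univ.filter fun y : Fin n => y ≠ x ∧ χ x y = true)
        ∪ (univ.filter fun y => y ≠ x ∧ χ x y = false) = univ.erase x := by
      ext y
      simp only [mem_union, mem_filter, mem_univ, true_and, mem_erase]
      constructor
      · rintro (⟨h, _⟩ | ⟨h, _⟩) <;> exact ⟨h, trivial⟩
      · rintro ⟨h, -⟩
        cases hc : χ x y
        · exact Or.inr ⟨h, rfl⟩
        · exact Or.inl ⟨h, rfl⟩
    have hdisj : Disjoint (univ.filter fun y : Fin n => y ≠ x ∧ χ x y = true)
        (univ.filter fun y => y ≠ x ∧ χ x y = false) := by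
      rw [disjoint_left]
      intro y h1 h2
      have := (mem_filter.1 h1).2.2
      have := (mem_filter.1 h2).2.2
      simp_all
    rw [← card_union_of_disjoint hdisj, hu, card_erase_of_mem (mem_univ x), card_univ,
      Fintype.card_fin]
  have hblue : ∀ x : Fin n,
      n - 1 - (univ.filter fun y => y ≠ x ∧ χ x y = true).card
        = (univ.filter fun y => y ≠ x ∧ χ x y = false).card := by
    intro x
    have := hdeg x
    omega
  -- the key natural number identity
  have hNcard : ((univ : Finset (Fin n)).powersetCard 3).card = n.choose 3 := by
    rw [card_powersetCard, card_univ, Fintype.card_fin]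
  have hTle : T ≤ n.choose 3 := hNcard ▸ card_filter_le _ _
  have key : (∑ x : Fin n, ((univ.filter fun y => y ≠ x ∧ χ x y = true).card).choose 2)
      + (∑ x : Fin n,
          (n - 1 - (univ.filter fun y => y ≠ x ∧ χ x y = true).card).choose 2)
      = 2 * T + n.choose 3 := by
    have e1 : (∑ x : Fin n, ((univ.filter fun y => y ≠ x ∧ χ x y = true).card).choose 2)
        + (∑ x : Fin n,
            (n - 1 - (univ.filter fun y => y ≠ x ∧ χ x y = true).card).choose 2)
        = ∑ x : Fin n, (((univ.erase x).powersetCard 2).filter (cond2 χ x)).card := by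
      rw [← Finset.sum_add_distrib]
      refine Finset.sum_congr rfl fun x _ => ?_
      rw [lemA χ x, hblue x]
    have e2 := lemB χ
    have e3 : ∑ S ∈ (univ : Finset (Fin n)).powersetCard 3,
        (S.filter fun x => cond2 χ x (S.erase x)).card
        = ∑ S ∈ (univ : Finset (Fin n)).powersetCard 3,
            (if ((∀ x ∈ S, ∀ y ∈ S, x ≠ y → χ x y = true) ∨
              (∀ x ∈ S, ∀ y ∈ S, x ≠ y → χ x y = false)) then 3 else 1) :=
      Finset.sum_congr rfl fun S hS => lemC χ hsymm S hS
    have e4 : ∑ S ∈ (univ : Finset (Fin n)).powersetCard 3,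
        (if ((∀ x ∈ S, ∀ y ∈ S, x ≠ y → χ x y = true) ∨
          (∀ x ∈ S, ∀ y ∈ S, x ≠ y → χ x y = false)) then 3 else 1)
        = 2 * T + n.choose 3 := by
      rw [Finset.sum_ite, Finset.sum_const, Finset.sum_const, smul_eq_mul, smul_eq_mul]
      have h5 := Finset.card_filter_add_card_filter_not (s := (univ : Finset (Fin n)).powersetCard 3)
        (p := fun S => (∀ x ∈ S, ∀ y ∈ S, x ≠ y → χ x y = true) ∨
          (∀ x ∈ S, ∀ y ∈ S, x ≠ y → χ x y = false))
      rw [hNcard] at h5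
      rw [← hT] at h5 ⊢
      omega
    rw [e1, e2, e3, e4]
  rw [← Nat.cast_sum, ← Nat.cast_sum]
  have keyR : ((∑ x : Fin n, ((univ.filter fun y => y ≠ x ∧ χ x y = true).card).choose 2 : ℕ) : ℝ)
      + ((∑ x : Fin n,
          (n - 1 - (univ.filter fun y => y ≠ x ∧ χ x y = true).card).choose 2 : ℕ) : ℝ)
      = 2 * T + n.choose 3 := by exact_mod_cast key
  linarith
end

section
/- Let V be a finite set of size n and g : V × V → ℝ a symmetric function with |g(x,y)| ≤ 1 for all x,y, and suppose Σ_y g(x,y)·g(y,z) ≤ ν·n for all x ≠ z, where 0 < ν ≤ 1. Then for any odd d ≥ 1, any c ≥ 0, and any function h of c+d variables bounded in absolute value by 1: |Σ_y Σ_{x_1,...,x_{c+d}} g(y,x_1)···g(y,x_d)·h(x_1,...,x_{c+d})| ≤ √2·ν^{d/2}·n^{c+d+1} + (1/(√2·ν^{d/2+1}))·n^{c+d}. -/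
lemma sum_comp_castLE {V : Type*} [Fintype V] (c d : ℕ) (u : (Fin d → V) → ℝ) :
    ∑ x : Fin (c + d) → V, u (fun i => x (Fin.castLE (Nat.le_add_left d c) i)) =
      (Fintype.card V : ℝ) ^ c * ∑ x : Fin d → V, u x := by
  classical
  let E : Fin (c + d) ≃ Fin d ⊕ Fin c :=
    (finCongr (Nat.add_comm c d)).trans finSumFinEquiv.symm
  let Φ : (Fin (c + d) → V) ≃ (Fin d → V) × (Fin c → V) :=
    (Equiv.arrowCongr E (Equiv.refl V)).trans (Equiv.sumArrowEquivProdArrow _ _ _)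
  have := Fintype.sum_bijective Φ Φ.bijective
    (fun x => u (fun i => x (Fin.castLE (Nat.le_add_left d c) i)))
    (fun p => u p.1) ?_
  · rw [this, Fintype.sum_prod_type]
    rw [← Finset.sum_comm]
    simp [Finset.sum_const, ← Finset.mul_sum]
  · intro x
    congr 1

lemma sqrt_add_le_aux (a b : ℝ) (ha : 0 < a) (hb : 0 ≤ b) :
    Real.sqrt (a + b) ≤
      Real.sqrt 2 * Real.sqrt a + b / (2 * Real.sqrt 2 * Real.sqrt a) := by
  set s := Real.sqrt a with hsdef
  set r := Real.sqrt 2 with hrdef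
  have hs : 0 < s := Real.sqrt_pos.mpr ha
  have hr : 0 < r := Real.sqrt_pos.mpr (by norm_num)
  have hs2 : s ^ 2 = a := Real.sq_sqrt ha.le
  have hr2 : r ^ 2 = 2 := Real.sq_sqrt (by norm_num)
  have hR : 0 ≤ r * s + b / (2 * r * s) := by positivity
  have hmul : r * s * (b / (2 * r * s)) = b / 2 := by
    field_simp
  have key : a + b ≤ (r * s + b / (2 * r * s)) ^ 2 := by
    nlinarith [sq_nonneg (b / (2 * r * s)), hmul, hs2, hr2, ha, hb]
  calc Real.sqrt (a + b) ≤ Real.sqrt ((r * s + b / (2 * r * s)) ^ 2) :=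
        Real.sqrt_le_sqrt key
    _ = r * s + b / (2 * r * s) := Real.sqrt_sq hR

theorem stmt5 (V : Type*) [Fintype V] (n : ℕ) (hn : Fintype.card V = n)
    (g : V → V → ℝ) (hsymm : ∀ x y, g x y = g y x) (hbd : ∀ x y, |g x y| ≤ 1)
    (ν : ℝ) (hν0 : 0 < ν) (hν1 : ν ≤ 1)
    (hquasi : ∀ x z : V, x ≠ z → ∑ y : V, g x y * g y z ≤ ν * n)
    (c d : ℕ) (hd : Odd d) (hd1 : 1 ≤ d)
    (h : (Fin (c + d) → V) → ℝ) (hh : ∀ x, |h x| ≤ 1) :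
    |∑ y : V, ∑ x : Fin (c + d) → V,
        (∏ i : Fin d, g y (x (Fin.castLE (Nat.le_add_left d c) i))) * h x| ≤
      Real.sqrt 2 * ν ^ ((d : ℝ) / 2) * (n : ℝ) ^ (c + d + 1) +
        1 / (Real.sqrt 2 * ν ^ ((d : ℝ) / 2 + 1)) * (n : ℝ) ^ (c + d) := by
  classical
  rcases Nat.eq_zero_or_pos n with rfl | hnpos
  · have : IsEmpty V := Fintype.card_eq_zero_iff.mp hn
    simp [zero_pow]
    positivity
  have hN1 : (1 : ℝ) ≤ (n : ℝ) := by exact_mod_cast hnpos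
  have hN0 : (0 : ℝ) < (n : ℝ) := by positivity
  set F : (Fin d → V) → ℝ := fun x => ∑ y : V, ∏ i : Fin d, g y (x i) with hF
  -- Step A
  have hstepA : |∑ y : V, ∑ x : Fin (c + d) → V,
      (∏ i : Fin d, g y (x (Fin.castLE (Nat.le_add_left d c) i))) * h x| ≤
      (n : ℝ) ^ c * ∑ x : Fin d → V, |F x| := by
    rw [Finset.sum_comm]
    calc |∑ x : Fin (c + d) → V, ∑ y : V,
          (∏ i : Fin d, g y (x (Fin.castLE (Nat.le_add_left d c) i))) * h x|
        ≤ ∑ x : Fin (c + d) → V, |∑ y : V,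
          (∏ i : Fin d, g y (x (Fin.castLE (Nat.le_add_left d c) i))) * h x| :=
          Finset.abs_sum_le_sum_abs _ _
      _ ≤ ∑ x : Fin (c + d) → V,
            |F (fun i => x (Fin.castLE (Nat.le_add_left d c) i))| := by
          apply Finset.sum_le_sum
          intro x _
          rw [← Finset.sum_mul, abs_mul]
          calc |F (fun i => x (Fin.castLE (Nat.le_add_left d c) i))| * |h x|
              ≤ |F (fun i => x (Fin.castLE (Nat.le_add_left d c) i))| * 1 := by
                apply mul_le_mul_of_nonneg_left (hh x) (abs_nonneg _)
            _ = _ := mul_one _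
      _ = (n : ℝ) ^ c * ∑ x : Fin d → V, |F x| := by
          rw [sum_comp_castLE c d (fun x => |F x|), hn]
  -- Step C: sum of squares identity
  have hFsq : ∑ x : Fin d → V, F x ^ 2 =
      ∑ y : V, ∑ y' : V, (∑ z : V, g y z * g z y') ^ d := by
    have : ∀ x : Fin d → V, F x ^ 2 = ∑ y : V, ∑ y' : V,
        ∏ i : Fin d, (g y (x i) * g y' (x i)) := by
      intro x
      rw [hF, sq, Finset.sum_mul_sum]
      congr 1; funext y; congr 1; funext y'
      rw [← Finset.prod_mul_distrib]
    rw [Finset.sum_congr rfl fun x _ => this x]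
    rw [Finset.sum_comm]
    congr 1; funext y
    rw [Finset.sum_comm]
    congr 1; funext y'
    have := Finset.prod_univ_sum (fun _ : Fin d => (Finset.univ : Finset V))
      (fun _ z => g y z * g y' z)
    rw [Fintype.piFinset_univ] at this
    rw [← this, Finset.prod_const]
    simp only [Finset.card_univ, Fintype.card_fin]
    exact congrArg (· ^ d) (Finset.sum_congr rfl fun z _ => by rw [hsymm y' z])
  -- Step D: bound the double sum
  have hD : ∑ y : V, ∑ y' : V, (∑ z : V, g y z * g z y') ^ d ≤
      (n : ℝ) ^ (d + 1) + (n : ℝ) ^ 2 * (ν * n) ^ d := by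
    have hpt : ∀ y y' : V, (∑ z : V, g y z * g z y') ^ d ≤
        (ν * n) ^ d + (if y = y' then (n : ℝ) ^ d else 0) := by
      intro y y'
      by_cases hyy : y = y'
      · subst hyy
        simp only [if_pos rfl]
        have h1 : (∑ z : V, g y z * g z y) ≤ (n : ℝ) := by
          calc ∑ z : V, g y z * g z y ≤ ∑ z : V, 1 := by
                apply Finset.sum_le_sum
                intro z _
                rw [hsymm z y]
                nlinarith [sq_nonneg (g y z), abs_le_one_iff_mul_self_le_one.mp (hbd y z)]
            _ = (n : ℝ) := by simp [hn]
        have h0 : 0 ≤ ∑ z : V, g y z * g z y := by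
          apply Finset.sum_nonneg
          intro z _
          rw [hsymm z y]
          exact mul_self_nonneg _
        calc (∑ z : V, g y z * g z y) ^ d ≤ (n : ℝ) ^ d := pow_le_pow_left₀ h0 h1 d
          _ ≤ (ν * n) ^ d + (n : ℝ) ^ d := le_add_of_nonneg_left (by positivity)
      · simp only [if_neg hyy, add_zero]
        exact (hd.strictMono_pow (R := ℝ)).monotone (hquasi y y' hyy)
    calc ∑ y : V, ∑ y' : V, (∑ z : V, g y z * g z y') ^ d
        ≤ ∑ y : V, ∑ y' : V, ((ν * n) ^ d + (if y = y' then (n : ℝ) ^ d else 0)) :=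
          Finset.sum_le_sum fun y _ => Finset.sum_le_sum fun y' _ => hpt y y'
      _ = (n : ℝ) ^ 2 * (ν * n) ^ d + (n : ℝ) * (n : ℝ) ^ d := by
          simp [Finset.sum_add_distrib, Finset.sum_ite_eq, hn, Finset.sum_const]
          ring
      _ = (n : ℝ) ^ (d + 1) + (n : ℝ) ^ 2 * (ν * n) ^ d := by ring
  -- Step B+E : Cauchy-Schwarz
  set S : ℝ := ∑ x : Fin d → V, |F x| with hSdef
  have hS0 : 0 ≤ S := Finset.sum_nonneg fun x _ => abs_nonneg _
  have hCS : S ^ 2 ≤ (n : ℝ) ^ d * ∑ x : Fin d → V, F x ^ 2 := by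
    have h1 := sq_sum_le_card_mul_sum_sq (s := (Finset.univ : Finset (Fin d → V)))
      (f := fun x => |F x|)
    have h2 : ((Finset.univ : Finset (Fin d → V)).card : ℝ) = (n : ℝ) ^ d := by
      rw [Finset.card_univ, Fintype.card_fun]
      simp [hn]
    simp only [sq_abs] at h1
    rw [h2] at h1
    exact h1
  have hSsq : S ^ 2 ≤ ν ^ d * (n : ℝ) ^ (2 * d + 2) + (n : ℝ) ^ (2 * d + 1) := by
    calc S ^ 2 ≤ (n : ℝ) ^ d * ∑ x : Fin d → V, F x ^ 2 := hCS
      _ ≤ (n : ℝ) ^ d * ((n : ℝ) ^ (d + 1) + (n : ℝ) ^ 2 * (ν * n) ^ d) := by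
          apply mul_le_mul_of_nonneg_left _ (by positivity)
          rw [hFsq]; exact hD
      _ = ν ^ d * (n : ℝ) ^ (2 * d + 2) + (n : ℝ) ^ (2 * d + 1) := by
          rw [mul_pow]; ring
  set P : ℝ := Real.sqrt (ν ^ d) with hPdef
  have hP0 : 0 < P := Real.sqrt_pos.mpr (by positivity)
  set r : ℝ := Real.sqrt 2 with hrdef
  have hr0 : 0 < r := Real.sqrt_pos.mpr (by norm_num)
  have hSle : S ≤ r * (P * (n : ℝ) ^ (d + 1)) +
      (n : ℝ) ^ (2 * d + 1) / (2 * r * (P * (n : ℝ) ^ (d + 1))) := by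
    have hsqrtA : Real.sqrt (ν ^ d * (n : ℝ) ^ (2 * d + 2)) = P * (n : ℝ) ^ (d + 1) := by
      rw [Real.sqrt_mul (by positivity)]
      congr 1
      rw [show (n : ℝ) ^ (2 * d + 2) = ((n : ℝ) ^ (d + 1)) ^ 2 by ring,
        Real.sqrt_sq (by positivity)]
    calc S = Real.sqrt (S ^ 2) := (Real.sqrt_sq hS0).symm
      _ ≤ Real.sqrt (ν ^ d * (n : ℝ) ^ (2 * d + 2) + (n : ℝ) ^ (2 * d + 1)) :=
          Real.sqrt_le_sqrt hSsq
      _ ≤ r * Real.sqrt (ν ^ d * (n : ℝ) ^ (2 * d + 2)) +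
          (n : ℝ) ^ (2 * d + 1) / (2 * r * Real.sqrt (ν ^ d * (n : ℝ) ^ (2 * d + 2))) :=
          sqrt_add_le_aux _ _ (by positivity) (by positivity)
      _ = _ := by rw [hsqrtA]
  -- Final assembly
  have hP_rpow : P = ν ^ ((d : ℝ) / 2) := by
    rw [hPdef, Real.sqrt_eq_rpow, ← Real.rpow_natCast ν d, ← Real.rpow_mul hν0.le]
    norm_num
    ring_nf
  have hP_rpow2 : ν ^ ((d : ℝ) / 2 + 1) = P * ν := by
    rw [Real.rpow_add hν0, Real.rpow_one, hP_rpow]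
  calc |∑ y : V, ∑ x : Fin (c + d) → V,
        (∏ i : Fin d, g y (x (Fin.castLE (Nat.le_add_left d c) i))) * h x|
      ≤ (n : ℝ) ^ c * S := hstepA
    _ ≤ (n : ℝ) ^ c * (r * (P * (n : ℝ) ^ (d + 1)) +
        (n : ℝ) ^ (2 * d + 1) / (2 * r * (P * (n : ℝ) ^ (d + 1)))) :=
        mul_le_mul_of_nonneg_left hSle (by positivity)
    _ = r * P * (n : ℝ) ^ (c + d + 1) + (n : ℝ) ^ (c + d) / (2 * (r * P)) := by
        field_simp
        ring
    _ ≤ r * P * (n : ℝ) ^ (c + d + 1) + (n : ℝ) ^ (c + d) / (r * (P * ν)) := by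
        apply add_le_add_right
        exact div_le_div_of_nonneg_left (by positivity) (by positivity)
          (by nlinarith [mul_pos hr0 hP0])
    _ = r * ν ^ ((d : ℝ) / 2) * (n : ℝ) ^ (c + d + 1) +
        1 / (r * ν ^ ((d : ℝ) / 2 + 1)) * (n : ℝ) ^ (c + d) := by
        rw [hP_rpow2, ← hP_rpow]
        ring
end

section
/- Let V be a finite set of size n and g : V × V → ℝ symmetric with |g| ≤ 1 and Σ_x g(y,x)·g(x,y') ≤ ν·n for all y ≠ y' with 0 < ν ≤ 1. Then for any even d ≥ 2: Σ_{y,y'} (Σ_x g(y,x)·g(x,y'))^d ≤ 2·ν^d·n^{d+2} + (2/ν)·n^{d+1}. -/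
lemma stmt6_aux_pow (a t : ℝ) (ha : 0 ≤ a) (ht : 0 < t) (d : ℕ) :
    a ^ d ≤ a ^ (d + 1) / t + t ^ d := by
  rcases le_total a t with h | h
  · have h1 : a ^ d ≤ t ^ d := pow_le_pow_left₀ ha h d
    have h2 : 0 ≤ a ^ (d+1) / t := div_nonneg (pow_nonneg ha _) ht.le
    linarith
  · have h1 : a ^ d * t ≤ a ^ d * a :=
      mul_le_mul_of_nonneg_left h (pow_nonneg ha _)
    have h2 : a ^ d ≤ a ^ (d+1) / t := by
      rw [le_div_iff₀ ht, pow_succ]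
      linarith
    have h3 : 0 ≤ t ^ d := pow_nonneg ht.le _
    linarith

lemma stmt6_pos {V : Type*} [Fintype V] (g : V → V → ℝ)
    (hsymm : ∀ x y, g x y = g y x) (k : ℕ) :
    0 ≤ ∑ y : V, ∑ y' : V, (∑ x : V, g y x * g x y') ^ k := by
  have expand : ∀ y y' : V, (∑ x : V, g y x * g x y') ^ k
      = ∑ p ∈ Fintype.piFinset (fun _ : Fin k => (Finset.univ : Finset V)),
          (∏ i, g y (p i)) * (∏ i, g y' (p i)) := by
    intro y y'
    have h1 : (∑ x : V, g y x * g x y') ^ k = ∏ _i : Fin k, ∑ x : V, g y x * g x y' := by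
      simp [Finset.prod_const]
    rw [h1, Finset.prod_univ_sum]
    refine Finset.sum_congr rfl fun p _ => ?_
    rw [Finset.prod_mul_distrib]
    congr 1
    exact Finset.prod_congr rfl fun i _ => hsymm (p i) y'
  simp_rw [expand]
  have rearr : ∑ y : V, ∑ y' : V, ∑ p ∈ Fintype.piFinset (fun _ : Fin k => (Finset.univ : Finset V)),
        (∏ i, g y (p i)) * (∏ i, g y' (p i))
      = ∑ p ∈ Fintype.piFinset (fun _ : Fin k => (Finset.univ : Finset V)),
        ∑ y : V, ∑ y' : V, (∏ i, g y (p i)) * (∏ i, g y' (p i)) := by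
    calc ∑ y : V, ∑ y' : V, ∑ p ∈ Fintype.piFinset (fun _ : Fin k => (Finset.univ : Finset V)),
          (∏ i, g y (p i)) * (∏ i, g y' (p i))
        = ∑ y : V, ∑ p ∈ Fintype.piFinset (fun _ : Fin k => (Finset.univ : Finset V)),
          ∑ y' : V, (∏ i, g y (p i)) * (∏ i, g y' (p i)) :=
          Finset.sum_congr rfl fun y _ => Finset.sum_comm
      _ = _ := Finset.sum_comm
  rw [rearr]
  refine Finset.sum_nonneg fun p _ => ?_
  have : ∑ y : V, ∑ y' : V, (∏ i, g y (p i)) * (∏ i, g y' (p i))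
      = (∑ y : V, ∏ i, g y (p i)) * (∑ y : V, ∏ i, g y (p i)) := by
    rw [Finset.sum_mul_sum]
  rw [this]
  exact mul_self_nonneg _

theorem stmt6 (V : Type*) [Fintype V] (n : ℕ) (hn : Fintype.card V = n)
    (g : V → V → ℝ) (hsymm : ∀ x y, g x y = g y x) (hbd : ∀ x y, |g x y| ≤ 1)
    (ν : ℝ) (hν0 : 0 < ν) (hν1 : ν ≤ 1)
    (hquasi : ∀ y y' : V, y ≠ y' → ∑ x : V, g y x * g x y' ≤ ν * n)
    (d : ℕ) (hd : Even d) (hd2 : 2 ≤ d) :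
    ∑ y : V, ∑ y' : V, (∑ x : V, g y x * g x y') ^ d ≤
      2 * ν ^ d * (n : ℝ) ^ (d + 2) + 2 / ν * (n : ℝ) ^ (d + 1) := by
  classical
  rcases Nat.eq_zero_or_pos n with hn0 | hnpos
  · subst hn0
    have : IsEmpty V := Fintype.card_eq_zero_iff.mp hn
    simp only [Finset.univ_eq_empty, Finset.sum_empty]
    positivity
  have hn1 : (1:ℝ) ≤ (n:ℝ) := by exact_mod_cast hnpos
  have hnR : (0:ℝ) < (n:ℝ) := by linarith
  set F : V × V → ℝ := fun p => ∑ x : V, g p.1 x * g x p.2 with hFdef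
  have hconv : ∀ k : ℕ, ∑ y : V, ∑ y' : V, (∑ x : V, g y x * g x y') ^ k
      = ∑ p : V × V, F p ^ k := fun k =>
    (Fintype.sum_prod_type (f := fun p : V × V => F p ^ k)).symm
  have hkey : ∀ k : ℕ, 0 ≤ ∑ p : V × V, F p ^ k := fun k => by
    rw [← hconv]; exact stmt6_pos g hsymm k
  have hFabs : ∀ p : V × V, |F p| ≤ (n:ℝ) := by
    intro p
    calc |F p| ≤ ∑ x : V, |g p.1 x * g x p.2| := Finset.abs_sum_le_sum_abs _ _
      _ ≤ ∑ _x : V, (1:ℝ) := by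
            refine Finset.sum_le_sum fun x _ => ?_
            rw [abs_mul]
            exact mul_le_one₀ (hbd _ _) (abs_nonneg _) (hbd _ _)
      _ = (n:ℝ) := by simp [hn]
  have hFle : ∀ p : V × V, F p ≤ (n:ℝ) := fun p => (abs_le.mp (hFabs p)).2
  set t : ℝ := ν * n with htdef
  have ht : 0 < t := mul_pos hν0 hnR
  set N : Finset (V × V) := Finset.univ.filter (fun p => F p < 0) with hN
  set Pd : Finset (V × V) := Finset.univ.filter (fun p => ¬ F p < 0 ∧ p.1 = p.2) with hPd
  set Po : Finset (V × V) := Finset.univ.filter (fun p => ¬ F p < 0 ∧ ¬ p.1 = p.2) with hPo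
  have hsplit : ∀ f : V × V → ℝ,
      ∑ p : V × V, f p = ∑ p ∈ N, f p + (∑ p ∈ Pd, f p + ∑ p ∈ Po, f p) := by
    intro f
    rw [← Finset.sum_filter_add_sum_filter_not Finset.univ (fun p => F p < 0) f]
    congr 1
    rw [← Finset.sum_filter_add_sum_filter_not
      (Finset.univ.filter (fun p => ¬ F p < 0)) (fun p => p.1 = p.2) f,
      Finset.filter_filter, Finset.filter_filter]
  -- cardinalities
  have hcard2 : (Finset.univ : Finset (V × V)).card = n ^ 2 := by
    simp [Fintype.card_prod, hn, sq]
  have hPdcard : (Pd.card : ℝ) ≤ (n:ℝ) := by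
    have : Pd.card ≤ n := by
      rw [← hn, ← Finset.card_univ]
      refine Finset.card_le_card_of_injOn Prod.fst (fun a _ => Finset.mem_univ _) ?_
      intro a ha b hb hab
      have ha' := (Finset.mem_filter.mp ha).2.2
      have hb' := (Finset.mem_filter.mp hb).2.2
      exact Prod.ext hab (by rw [← ha', ← hb', hab])
    exact_mod_cast this
  have hPocard : (Po.card : ℝ) ≤ (n:ℝ) ^ 2 := by
    have : Po.card ≤ n ^ 2 := hcard2 ▸ Finset.card_filter_le _ _
    exact_mod_cast this
  have hNPocard : (N.card : ℝ) + (Po.card : ℝ) ≤ (n:ℝ) ^ 2 := by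
    have hdisj : Disjoint N Po := by
      rw [Finset.disjoint_left]
      intro a haN haPo
      exact (Finset.mem_filter.mp haPo).2.1 (Finset.mem_filter.mp haN).2
    have : N.card + Po.card ≤ n ^ 2 := by
      rw [← Finset.card_union_of_disjoint hdisj, ← hcard2]
      exact Finset.card_le_card (Finset.subset_univ _)
    exact_mod_cast this
  -- pointwise facts
  have hPoF : ∀ p ∈ Po, 0 ≤ F p ∧ F p ≤ t := by
    intro p hp
    have h := Finset.mem_filter.mp hp
    exact ⟨not_lt.mp h.2.1, hquasi p.1 p.2 h.2.2⟩
  have hPdF : ∀ p ∈ Pd, 0 ≤ F p := fun p hp => not_lt.mp (Finset.mem_filter.mp hp).2.1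
  have hNF : ∀ p ∈ N, F p < 0 := fun p hp => (Finset.mem_filter.mp hp).2
  -- sum bounds
  have hbPd : ∀ k : ℕ, ∑ p ∈ Pd, F p ^ k ≤ (n:ℝ) ^ (k + 1) := by
    intro k
    calc ∑ p ∈ Pd, F p ^ k ≤ ∑ _p ∈ Pd, (n:ℝ) ^ k :=
        Finset.sum_le_sum fun p hp => pow_le_pow_left₀ (hPdF p hp) (hFle p) k
      _ = Pd.card * (n:ℝ) ^ k := by rw [Finset.sum_const, nsmul_eq_mul]
      _ ≤ (n:ℝ) * (n:ℝ) ^ k :=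
        mul_le_mul_of_nonneg_right hPdcard (pow_nonneg hnR.le _)
      _ = (n:ℝ) ^ (k + 1) := by ring
  have hbPo : ∑ p ∈ Po, F p ^ d ≤ (Po.card : ℝ) * t ^ d := by
    calc ∑ p ∈ Po, F p ^ d ≤ ∑ _p ∈ Po, t ^ d :=
        Finset.sum_le_sum fun p hp => pow_le_pow_left₀ (hPoF p hp).1 (hPoF p hp).2 d
      _ = (Po.card : ℝ) * t ^ d := by rw [Finset.sum_const, nsmul_eq_mul]
  have hbPo1 : ∑ p ∈ Po, F p ^ (d + 1) ≤ t * ∑ p ∈ Po, F p ^ d := by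
    rw [Finset.mul_sum]
    refine Finset.sum_le_sum fun p hp => ?_
    rw [pow_succ]
    calc F p ^ d * F p ≤ F p ^ d * t :=
        mul_le_mul_of_nonneg_left (hPoF p hp).2 (pow_nonneg (hPoF p hp).1 _)
      _ = t * F p ^ d := mul_comm _ _
  have hPoD : 0 ≤ ∑ p ∈ Po, F p ^ d :=
    Finset.sum_nonneg fun p hp => pow_nonneg (hPoF p hp).1 _
  have hodd : Odd (d + 1) := hd.add_one
  have hbN1 : ∑ p ∈ N, (-F p) ^ (d + 1)
      ≤ (n:ℝ) ^ (d + 2) + t * ∑ p ∈ Po, F p ^ d := by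
    have h1 : ∑ p ∈ N, (-F p) ^ (d + 1) = -∑ p ∈ N, F p ^ (d + 1) := by
      rw [← Finset.sum_neg_distrib]
      exact Finset.sum_congr rfl fun p _ => hodd.neg_pow _
    have h2 := hkey (d + 1)
    rw [hsplit (fun p => F p ^ (d + 1))] at h2
    have h3 := hbPd (d + 1)
    have : (d + 1) + 1 = d + 2 := rfl
    rw [h1]
    linarith [hbPo1]
  have hbN : ∑ p ∈ N, F p ^ d
      ≤ ((n:ℝ) ^ (d + 2) + t * ∑ p ∈ Po, F p ^ d) / t + (N.card : ℝ) * t ^ d := by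
    calc ∑ p ∈ N, F p ^ d ≤ ∑ p ∈ N, ((-F p) ^ (d + 1) / t + t ^ d) := by
            refine Finset.sum_le_sum fun p hp => ?_
            rw [← hd.neg_pow (F p)]
            exact stmt6_aux_pow (-F p) t (by linarith [hNF p hp]) ht d
      _ = (∑ p ∈ N, (-F p) ^ (d + 1)) / t + (N.card : ℝ) * t ^ d := by
            rw [Finset.sum_add_distrib, Finset.sum_div, Finset.sum_const, nsmul_eq_mul]
      _ ≤ ((n:ℝ) ^ (d + 2) + t * ∑ p ∈ Po, F p ^ d) / t + (N.card : ℝ) * t ^ d := by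
            gcongr
  -- assemble
  rw [hconv d, hsplit (fun p => F p ^ d)]
  have hdivsplit : ((n:ℝ) ^ (d + 2) + t * ∑ p ∈ Po, F p ^ d) / t
      = (n:ℝ) ^ (d + 2) / t + ∑ p ∈ Po, F p ^ d := by
    field_simp
  have hdivt : (n:ℝ) ^ (d + 2) / t = (n:ℝ) ^ (d + 1) / ν := by
    rw [htdef]
    rw [pow_succ]
    field_simp
  have htd0 : (0:ℝ) ≤ t ^ d := pow_nonneg ht.le _
  have heqt : (n:ℝ) ^ 2 * t ^ d = ν ^ d * (n:ℝ) ^ (d + 2) := by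
    rw [htdef, mul_pow]
    ring
  have hν' : (n:ℝ) ^ (d + 1) ≤ (n:ℝ) ^ (d + 1) / ν := by
    rw [le_div_iff₀ hν0]
    nlinarith [pow_nonneg hnR.le (d+1)]
  have hcards : 2 * ((Po.card : ℝ) * t ^ d) + (N.card : ℝ) * t ^ d
      ≤ 2 * (ν ^ d * (n:ℝ) ^ (d + 2)) := by
    have h1 := mul_le_mul_of_nonneg_right hNPocard htd0
    have h2 := mul_le_mul_of_nonneg_right hPocard htd0
    nlinarith [heqt]
  have hgoal2 : 2 / ν * (n:ℝ) ^ (d + 1) = 2 * ((n:ℝ) ^ (d + 1) / ν) := by ring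
  rw [hdivsplit, hdivt] at hbN
  have hPd' := hbPd d
  linarith [hbN, hPd', hbPo, hPoD, hcards, hν', hgoal2.le, hgoal2.ge]
end

section
/- For natural numbers k ≥ l ≥ 1 and r ≥ 2 with k + l ≥ 2r, the inequality (k/(k+l))^{r-2} - ((k-1)(k-2)···(k-r+2))/((k+l-1)(k+l-2)···(k+l-r+2)) ≥ C(r-1,2)·l·k^{r-3}/(k+l)^{r-1} - 2^r/(k+l)² holds. -/
set_option maxHeartbeats 1000000
open Finset

lemma bonf (s : Finset ℕ) (a : ℕ → ℝ) (h0 : ∀ i ∈ s, 0 ≤ a i) (h1 : ∀ i ∈ s, a i ≤ 1) :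
    ∏ i ∈ s, (1 - a i) ≤ 1 - (∑ i ∈ s, a i) + (∑ i ∈ s, a i)^2/2 := by
  induction s using Finset.cons_induction with
  | empty => norm_num
  | cons x s hx ih =>
    rw [Finset.prod_cons, Finset.sum_cons]
    have hax0 := h0 x (Finset.mem_cons_self _ _)
    have hax1 := h1 x (Finset.mem_cons_self _ _)
    have hS0 : 0 ≤ ∑ i ∈ s, a i := Finset.sum_nonneg fun i hi => h0 i (Finset.mem_cons_of_mem hi)
    have hih := ih (fun i hi => h0 i (Finset.mem_cons_of_mem hi))
      (fun i hi => h1 i (Finset.mem_cons_of_mem hi))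
    nlinarith [mul_le_mul_of_nonneg_left hih (by linarith : (0:ℝ) ≤ 1 - a x),
      sq_nonneg (a x), mul_nonneg hax0 (sq_nonneg (∑ i ∈ s, a i))]

lemma natpow : ∀ m : ℕ, (m*(m+1))^2 ≤ 2^(m+5) := by
  intro m
  induction m with
  | zero => norm_num
  | succ n ih =>
    rcases lt_or_ge n 5 with h | h
    · interval_cases n <;> norm_num
    · have h2 : ((n+1)*(n+2))^2 ≤ 2 * (n*(n+1))^2 := by nlinarith
      calc ((n+1)*((n+1)+1))^2 ≤ 2 * (n*(n+1))^2 := h2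
        _ ≤ 2 * 2^(n+5) := by omega
        _ = 2^(n+1+5) := by ring

lemma gauss (n : ℕ) : ∑ i ∈ Finset.Icc 1 n, (i:ℝ) = n*(n+1)/2 := by
  induction n with
  | zero => simp
  | succ n ih =>
    rw [Finset.sum_Icc_succ_top (by omega), ih]
    push_cast; ring


theorem stmt13 (k l r : ℕ) (hl : 1 ≤ l) (hkl : l ≤ k) (hr : 2 ≤ r) (hsum : 2 * r ≤ k + l) :
    ((k : ℝ) / (k + l)) ^ (r - 2) -
        (∏ i ∈ Finset.Icc 1 (r - 2), ((k : ℝ) - i)) /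
          (∏ i ∈ Finset.Icc 1 (r - 2), ((k : ℝ) + l - i)) ≥
      ((r - 1).choose 2 : ℝ) * l * (k : ℝ) ^ (r - 3) / ((k : ℝ) + l) ^ (r - 1) -
        2 ^ r / ((k : ℝ) + l) ^ 2 := by
  have hL1 : (1:ℝ) ≤ l := by exact_mod_cast hl
  have hLK : (l:ℝ) ≤ k := by exact_mod_cast hkl
  have hKpos : (0:ℝ) < k := by linarith
  have hNpos : (0:ℝ) < (k:ℝ) + l := by linarith
  rcases eq_or_lt_of_le hr with h2 | h3
  · subst h2
    simp only [show 2-2 = 0 from rfl, show (2:ℕ)-1 = 1 from rfl]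
    simp only [Finset.Icc_self, pow_zero]
    norm_num [Finset.Icc_eq_empty_iff]
    positivity
  · have h3' : 3 ≤ r := h3
    rcases eq_or_lt_of_le h3' with h3e | h4
    · subst h3e
      have hN6 : (6:ℝ) ≤ (k:ℝ) + l := by
        have h : ((2*3:ℕ):ℝ) ≤ ((k+l:ℕ):ℝ) := Nat.cast_le.mpr hsum
        push_cast at h; linarith
      simp only [show (3:ℕ)-2 = 1 from rfl, show (3:ℕ)-1 = 2 from rfl, show (3:ℕ)-3 = 0 from rfl,
        Finset.Icc_self, Finset.prod_singleton, pow_one, pow_zero, Nat.cast_one]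
      norm_num
      have hN1 : (0:ℝ) < (k:ℝ) + l - 1 := by linarith
      have key : (k:ℝ)/((k:ℝ)+l) - ((k:ℝ)-1)/((k:ℝ)+l-1) = (l:ℝ)/(((k:ℝ)+l)*((k:ℝ)+l-1)) := by
        field_simp
        ring
      rw [key]
      have h1 : (l:ℝ)/(((k:ℝ)+l)^2) ≤ (l:ℝ)/(((k:ℝ)+l)*((k:ℝ)+l-1)) := by
        apply div_le_div_of_nonneg_left (by linarith) (by positivity)
        nlinarith
      have h2 : (0:ℝ) < 8/((k:ℝ)+l)^2 := by positivity
      linarith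
    · obtain ⟨j, rfl⟩ : ∃ j, r = j + 4 := ⟨r - 4, by omega⟩
      simp only [show j+4-2 = j+2 from rfl, show j+4-1 = j+3 from rfl, show j+4-3 = j+1 from rfl]
      set K : ℝ := (k:ℝ) with hKdef
      set L : ℝ := (l:ℝ) with hLdef
      set N : ℝ := K + L with hNdef
      have hN2r : 2*((j:ℝ)+4) ≤ N := by
        have h : ((2*(j+4):ℕ):ℝ) ≤ ((k+l:ℕ):ℝ) := Nat.cast_le.mpr hsum
        push_cast at h; linarith
      have hKr : (j:ℝ)+4 ≤ K := by linarith
      -- bounds on members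
      have hmem : ∀ i ∈ Finset.Icc 1 (j+2), (1:ℝ) ≤ (i:ℝ) ∧ (i:ℝ) ≤ (j:ℝ)+2 := by
        intro i hi
        rw [Finset.mem_Icc] at hi
        constructor
        · exact_mod_cast hi.1
        · have := hi.2; exact_mod_cast Nat.cast_le.mpr this
      have hNi : ∀ i ∈ Finset.Icc 1 (j+2), (0:ℝ) < N - i := by
        intro i hi; have := (hmem i hi).2; linarith
      have hKi : ∀ i ∈ Finset.Icc 1 (j+2), (0:ℝ) < K - i := by
        intro i hi; have := (hmem i hi).2; linarith
      set a : ℕ → ℝ := fun i => i * L / (K * (N - i)) with hadef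
      have ha0 : ∀ i ∈ Finset.Icc 1 (j+2), 0 ≤ a i := by
        intro i hi
        have h1 := (hmem i hi).1
        have h2 := hNi i hi
        apply div_nonneg (by positivity) (by positivity)
      have ha1 : ∀ i ∈ Finset.Icc 1 (j+2), a i ≤ 1 := by
        intro i hi
        obtain ⟨h1, h2⟩ := hmem i hi
        have h3 := hNi i hi
        rw [hadef]
        rw [div_le_one (by positivity)]
        -- i*L ≤ K*(N-i) :  i*L ≤ (j+2)*K ≤ K*(N-i) since N-i ≥ j+2... N-i ≥ N-(j+2) ≥ j+6
        have : N - i ≥ (j:ℝ)+2 := by linarith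
        nlinarith
      -- product identity
      have hfac : ∀ i ∈ Finset.Icc 1 (j+2), (K - i)/(N - i) = K/N * (1 - a i) := by
        intro i hi
        have h3 := hNi i hi
        rw [hadef]
        field_simp
        ring
      have prodeq : (∏ i ∈ Finset.Icc 1 (j+2), (K - i)) / (∏ i ∈ Finset.Icc 1 (j+2), (N - i))
          = (K/N)^(j+2) * ∏ i ∈ Finset.Icc 1 (j+2), (1 - a i) := by
        rw [← Finset.prod_div_distrib, Finset.prod_congr rfl hfac, Finset.prod_mul_distrib,
          Finset.prod_const, Nat.card_Icc]
        norm_num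
      set S : ℝ := ∑ i ∈ Finset.Icc 1 (j+2), a i with hSdef
      set C : ℝ := ((j:ℝ)+2)*((j:ℝ)+3)/2 with hCdef
      have hCpos : 0 < C := by positivity
      have hS0 : 0 ≤ S := Finset.sum_nonneg ha0
      -- lower bound on S
      have hSlow : L/(K*N) * C ≤ S := by
        have step : ∀ i ∈ Finset.Icc 1 (j+2), (i:ℝ) * (L/(K*N)) ≤ a i := by
          intro i hi
          obtain ⟨h1, h2⟩ := hmem i hi
          have h3 := hNi i hi
          simp only [hadef]
          rw [show (i:ℝ) * (L/(K*N)) = ((i:ℝ)*L)/(K*N) from by ring,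
            div_le_div_iff₀ (by positivity) (by positivity)]
          have hnn : (0:ℝ) ≤ (i:ℝ)*L*K := by positivity
          have hi0 : (0:ℝ) ≤ (i:ℝ) := by linarith
          nlinarith [mul_nonneg hnn hi0]
        have := Finset.sum_le_sum step
        rw [← Finset.sum_mul, gauss] at this
        calc L/(K*N) * C = ((j:ℝ)+2)*(((j:ℝ)+2)+1)/2 * (L/(K*N)) := by rw [hCdef]; ring
          _ ≤ S := by convert this using 3 <;> push_cast <;> rfl
      -- upper bound on S
      have hShigh : S ≤ C * (2*L/(K*N)) := by
        have step : ∀ i ∈ Finset.Icc 1 (j+2), a i ≤ (i:ℝ) * (2*L/(K*N)) := by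
          intro i hi
          obtain ⟨h1, h2⟩ := hmem i hi
          have h3 := hNi i hi
          simp only [hadef]
          rw [show (i:ℝ) * (2*L/(K*N)) = ((i:ℝ)*L*2)/(K*N) from by ring,
            div_le_div_iff₀ (by positivity) (by positivity)]
          have hnn : (0:ℝ) ≤ (i:ℝ)*L*K := by positivity
          have hhalf : (0:ℝ) ≤ N - 2*i := by linarith
          nlinarith [mul_nonneg hnn hhalf]
        have := Finset.sum_le_sum step
        rw [← Finset.sum_mul, gauss] at this
        calc S ≤ ((j:ℝ)+2)*(((j:ℝ)+2)+1)/2 * (2*L/(K*N)) := by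
              convert this using 3 <;> push_cast <;> rfl
          _ = C * (2*L/(K*N)) := by rw [hCdef]; ring
      -- assemble
      have hbonf := bonf (Finset.Icc 1 (j+2)) a ha0 ha1
      rw [prodeq]
      set p : ℝ := (K/N)^(j+2) with hpdef
      have hp0 : (0:ℝ) ≤ p := by positivity
      have hCh : (((j+3).choose 2 : ℕ) : ℝ) = C := by
        rw [Nat.cast_choose_two, hCdef]; push_cast; ring
      have h1 : C * L * K^(j+1)/N^(j+3) ≤ p * S := by
        have hmul := mul_le_mul_of_nonneg_left hSlow hp0
        calc C*L*K^(j+1)/N^(j+3) = p * (L/(K*N)*C) := by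
              rw [hpdef, div_pow]; field_simp; ring
          _ ≤ p * S := hmul
      have hnat : ((j+2)*(j+3))^2 ≤ 2^(j+7) := natpow (j+2)
      have hnatR : (((j:ℝ)+2)*((j:ℝ)+3))^2 ≤ 2^(j+7) := by exact_mod_cast hnat
      have hpow7 : (2:ℝ)^(j+7) = 2*2^(j+6) := by ring
      have hC2 : 2*C^2 ≤ 2^(j+6) := by
        have he : 2*C^2 = (((j:ℝ)+2)*((j:ℝ)+3))^2/2 := by rw [hCdef]; ring
        rw [he]; linarith [hnatR, hpow7]
      have hNj : K^j ≤ N^j := pow_le_pow_left₀ hKpos.le (by linarith) j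
      have hKj0 : (0:ℝ) ≤ K^j := by positivity
      have hL2 : (0:ℝ) ≤ L^2 := sq_nonneg L
      have hN2 : 4*L^2 ≤ N^2 := by nlinarith
      have key : 2*(K^j*L^2)*C^2 ≤ 2^(j+4)*N^(j+2) := by
        have e2 : K^j*(4*L^2) ≤ N^j*N^2 := mul_le_mul hNj hN2 (by positivity) (by positivity)
        calc 2*(K^j*L^2)*C^2 ≤ (K^j*L^2)*2^(j+6) := by
              nlinarith [mul_le_mul_of_nonneg_left hC2 (mul_nonneg hKj0 hL2)]
          _ = 2^(j+4)*(K^j*(4*L^2)) := by ring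
          _ ≤ 2^(j+4)*(N^j*N^2) := by
              apply mul_le_mul_of_nonneg_left e2 (by positivity)
          _ = 2^(j+4)*N^(j+2) := by ring
      have h2 : p * S^2/2 ≤ 2^(j+4)/N^2 := by
        have hSB : S^2 ≤ (C*(2*L/(K*N)))^2 := by nlinarith [hShigh, hS0]
        have e : p * (C*(2*L/(K*N)))^2/2 = 2*(K^j*L^2)*C^2/(N^(j+2)*N^2) := by
          rw [hpdef, div_pow]; field_simp; ring
        calc p*S^2/2 ≤ p*(C*(2*L/(K*N)))^2/2 := by
              have := mul_le_mul_of_nonneg_left hSB hp0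
              linarith
          _ = 2*(K^j*L^2)*C^2/(N^(j+2)*N^2) := e
          _ ≤ 2^(j+4)/N^2 := by
              rw [div_le_div_iff₀ (by positivity) (by positivity)]
              nlinarith [mul_le_mul_of_nonneg_right key (sq_nonneg N)]
      have hm := mul_le_mul_of_nonneg_left hbonf hp0
      have expand : p * (1 - S + S^2/2) = p - p*S + p*S^2/2 := by ring
      rw [expand] at hm
      rw [ge_iff_le, hCh]
      linarith [h1, h2, hm]
end

section
/- Suppose that for every integer r ≥ 5 and all k there are constants c, d > 0 such that r(k+1,k+1) ≤ (r^{c·r²}/k^{d·r})·C(2k,k). Then there exists a constant C > 0 such that for all sufficiently large k, r(k+1,k+1) ≤ k^{-C·log k / log log k}·C(2k,k). -/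
set_option maxHeartbeats 1600000 in
theorem stmt19
    (h : ∃ c d : ℝ, 0 < c ∧ 0 < d ∧ ∀ r : ℕ, 5 ≤ r → ∀ k : ℕ, 1 ≤ k →
      (ramsey (k + 1) (k + 1) : ℝ) ≤
        (r : ℝ) ^ (c * (r : ℝ) ^ 2) / (k : ℝ) ^ (d * (r : ℝ)) * ((2 * k).choose k : ℝ)) :
    ∃ C : ℝ, 0 < C ∧ ∃ k₀ : ℕ, ∀ k : ℕ, k₀ ≤ k →
      (ramsey (k + 1) (k + 1) : ℝ) ≤
        (k : ℝ) ^ (-(C * Real.log k / Real.log (Real.log k))) * ((2 * k).choose k : ℝ) := by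
  obtain ⟨c, d, hc, hd, h⟩ := h
  refine ⟨d ^ 2 / (8 * c), by positivity, ?_⟩
  have hlogk : Filter.Tendsto (fun k : ℕ => Real.log k) Filter.atTop Filter.atTop :=
    Real.tendsto_log_atTop.comp tendsto_natCast_atTop_atTop
  have hMt : Filter.Tendsto (fun k : ℕ => Real.log (Real.log k)) Filter.atTop Filter.atTop :=
    Real.tendsto_log_atTop.comp hlogk
  have e1 : ∀ᶠ k : ℕ in Filter.atTop, max 1 (d / (2 * c)) ≤ Real.log (Real.log k) :=
    hMt.eventually_ge_atTop _
  have e2 : ∀ᶠ k : ℕ in Filter.atTop,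
      Real.log (Real.log k) ≤ d / (12 * c) * Real.log k := by
    have hlo := Real.isLittleO_log_id_atTop.def (show (0:ℝ) < d / (12 * c) by positivity)
    filter_upwards [hlogk.eventually hlo, hlogk.eventually_ge_atTop 0] with k h1 h2
    calc Real.log (Real.log k) ≤ |Real.log (Real.log k)| := le_abs_self _
      _ ≤ d / (12 * c) * |Real.log k| := h1
      _ = d / (12 * c) * Real.log k := by rw [abs_of_nonneg h2]
  have e3 : ∀ᶠ k : ℕ in Filter.atTop, 3 ≤ k := Filter.eventually_ge_atTop 3
  obtain ⟨k₀, hk₀⟩ := Filter.eventually_atTop.mp ((e1.and e2).and e3)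
  refine ⟨k₀, fun k hk => ?_⟩
  obtain ⟨⟨hmax, hBM⟩, hk3⟩ := hk₀ k hk
  set L := Real.log k with hLdef
  set M := Real.log L with hMdef
  have hM1 : (1:ℝ) ≤ M := le_trans (le_max_left _ _) hmax
  have hMd : d / (2 * c) ≤ M := le_trans (le_max_right _ _) hmax
  have hM0 : (0:ℝ) < M := lt_of_lt_of_le one_pos hM1
  have hk0 : (0:ℝ) < (k:ℝ) := by
    have : (3:ℝ) ≤ (k:ℝ) := by exact_mod_cast hk3
    linarith
  have hL1 : (1:ℝ) < L := by
    rw [hLdef, Real.lt_log_iff_exp_lt hk0]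
    calc Real.exp 1 < 2.7182818286 := Real.exp_one_lt_d9
      _ ≤ (k:ℝ) := by
        have : (3:ℝ) ≤ (k:ℝ) := by exact_mod_cast hk3
        linarith
  have hL0 : (0:ℝ) < L := lt_trans one_pos hL1
  -- define x and r
  set x := d * L / (2 * c * M) with hxdef
  have hxM : x * (2 * c * M) = d * L := by
    rw [hxdef]; field_simp
  have hx6 : (6:ℝ) ≤ x := by
    rw [hxdef, le_div_iff₀ (by positivity)]
    rw [div_mul_eq_mul_div, le_div_iff₀ (by positivity)] at hBM
    nlinarith
  have hx0 : (0:ℝ) < x := by linarith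
  set r := ⌊x⌋₊ with hrdef
  have hr5 : 5 ≤ r := Nat.le_floor (by push_cast; linarith)
  have hrx : (r:ℝ) ≤ x := Nat.floor_le hx0.le
  have hxr : x < (r:ℝ) + 1 := Nat.lt_floor_add_one x
  have hx2r : x ≤ 2 * (r:ℝ) := by
    have : (5:ℝ) ≤ (r:ℝ) := by exact_mod_cast hr5
    linarith
  have hr0 : (0:ℝ) < (r:ℝ) := by
    have : (5:ℝ) ≤ (r:ℝ) := by exact_mod_cast hr5
    linarith
  have hxL : x ≤ L := by
    rw [hxdef, div_le_iff₀ (by positivity)]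
    rw [div_le_iff₀ (by positivity)] at hMd
    nlinarith
  have hlr : Real.log r ≤ M := by
    calc Real.log r ≤ Real.log x := Real.log_le_log hr0 hrx
      _ ≤ Real.log L := Real.log_le_log hx0 hxL
      _ = M := hMdef.symm
  have hk1 : 1 ≤ k := by omega
  have hmain := h r hr5 k hk1
  refine le_trans hmain (mul_le_mul_of_nonneg_right ?_ (by positivity))
  -- key inequality on the factor
  have hlhs : (0:ℝ) < (r:ℝ) ^ (c * (r:ℝ) ^ 2) / (k:ℝ) ^ (d * (r:ℝ)) := by positivity
  have hrhs : (0:ℝ) < (k:ℝ) ^ (-(d ^ 2 / (8 * c) * L / M)) := by positivity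
  rw [← Real.log_le_log_iff hlhs hrhs, Real.log_div (by positivity) (by positivity),
    Real.log_rpow hr0, Real.log_rpow hk0, Real.log_rpow hk0]
  set lr := Real.log r with hlrdef
  have hlr0 : (0:ℝ) ≤ lr := by
    rw [hlrdef]
    apply Real.log_nonneg
    linarith
  have heq : -(d ^ 2 / (8 * c) * L / M) * L = -(d ^ 2 * L ^ 2) / (8 * c * M) := by
    field_simp
  rw [heq, le_div_iff₀ (by positivity : (0:ℝ) < 8 * c * M), ← hLdef]
  have hdL : d * L = 2 * c * M * x := by linarith [hxM]
  have hdrL : d * (r:ℝ) * L = 2 * c * M * x * (r:ℝ) := by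
    rw [show d * (r:ℝ) * L = (r:ℝ) * (d * L) by ring, hdL]; ring
  have hdL2 : d ^ 2 * L ^ 2 = 4 * c ^ 2 * M ^ 2 * x ^ 2 := by
    rw [show d ^ 2 * L ^ 2 = (d * L) ^ 2 by ring, hdL]; ring
  have hA : c * (r:ℝ) ^ 2 * lr ≤ c * (r:ℝ) ^ 2 * M :=
    mul_le_mul_of_nonneg_left hlr (by positivity)
  have hA' := mul_le_mul_of_nonneg_right hA (by positivity : (0:ℝ) ≤ 8 * c * M)
  have h3 : (0:ℝ) ≤ 4 * c ^ 2 * M ^ 2 * ((x - (r:ℝ)) * (2 * (r:ℝ) - x)) :=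
    mul_nonneg (by positivity)
      (mul_nonneg (by linarith) (by linarith))
  have h4 : (0:ℝ) ≤ 4 * c ^ 2 * M ^ 2 * ((r:ℝ) * x) :=
    mul_nonneg (by positivity) (mul_nonneg hr0.le hx0.le)
  nlinarith [hA', h3, h4, hdrL, hdL2]
end
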